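/- Let D be a positive integer and let α, σ, φ, ψ, ξ, η be real numbers with φσ − ψα ≠ 0. Let x, n, x̂, n̂ be vectors in ℝ^D such that αx + σn = αx̂ + σn̂. Then (ξx̂ + ηn̂) − (ξx + ηn) = κ · ((φx̂ + ψn̂) − (φx + ψn)), where κ = (ξσ − ηα)/(φσ − ψα). -/

import Mathlib

/-- In the generalized diffusion framework, for any alternative target
`w = ξx + ηn`, the error `ŵ − w` equals `κ · (û − u)` with
`κ = (ξσ − ηα)/(φσ − ψα)`, whenever `αx + σn = αx̂ + σn̂`. -/
theorem stmt_0 (D : ℕ) (hD : 0 < D) (α σ φ ψ ξ η : ℝ)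
    (hden : φ * σ - ψ * α ≠ 0)
    (x n xhat nhat : Fin D → ℝ)
    (hz : α • x + σ • n = α • xhat + σ • nhat) :
    (ξ • xhat + η • nhat) - (ξ • x + η • n) =
      ((ξ * σ - η * α) / (φ * σ - ψ * α)) •
        ((φ • xhat + ψ • nhat) - (φ • x + ψ • n)) := by
  funext i
  have h := congrFun hz i
  simp only [Pi.add_apply, Pi.smul_apply, smul_eq_mul, Pi.sub_apply] at h ⊢
  field_simp
  rw [eq_div_iff (by rwa [mul_comm σ, mul_comm α])]
  linear_combination (ξ * ψ - η * φ) * h
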